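/- arXiv:1910.12402 — 3 statements merged into one kernel-verified Lean document; each statement's English description precedes it below -/
import Mathlib

section
/- For all u, v in Λ³(ℂ⁹), the transpose of the endomorphism u × v equals v × u: (u × v)ᵀ = v × u. -/
open scoped BigOperators
open Matrix

noncomputable section

/-- Index type for a basis of `Λᵏ(ℂ⁹)`: subsets of `Fin 9` of cardinality `k`. -/
abbrev Idx (k : ℕ) : Type := {s : Finset (Fin 9) // s.card = k}

/-- `Λᵏ(ℂ⁹)` in coordinates with respect to the basis `e_{i₁} ∧ ⋯ ∧ e_{i_k}`, `i₁ < ⋯ < i_k`. -/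
abbrev Lam (k : ℕ) : Type := Idx k → ℂ

/-- Sign obtained when sorting the increasing enumeration of `s` followed by that of `t`. -/
def sgn (s t : Finset (Fin 9)) : ℂ :=
  (-1 : ℂ) ^ (∑ i ∈ s, (t.filter (fun j => j < i)).card)

/-- Wedge product `Λᵏ × Λˡ → Λ^{k+l}`. -/
def wedge {k l : ℕ} (u : Lam k) (v : Lam l) : Lam (k + l) := fun w =>
  ∑ s ∈ (w.1.powerset.filter fun s => s.card = k).attach,
    sgn s.1 (w.1 \ s.1) *
      u ⟨s.1, by
        have hs := s.2
        simp only [Finset.mem_filter] at hs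
        exact hs.2⟩ *
      v ⟨w.1 \ s.1, by
        have hs := s.2
        simp only [Finset.mem_filter, Finset.mem_powerset] at hs
        rw [Finset.card_sdiff, Finset.inter_eq_left.mpr hs.1, w.2, hs.2]
        omega⟩

/-- The Hodge star operator `Λᵏ → Λˡ`, `k + l = 9`, characterized by
`(⋆u, v) = (u ∧ v, e₁ ∧ ⋯ ∧ e₉)`. -/
def hstar {k l : ℕ} (h : k + l = 9) (u : Lam k) : Lam l := fun t =>
  sgn t.1ᶜ t.1 *
    u ⟨t.1ᶜ, by
      rw [Finset.card_compl, t.2]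
      simp only [Fintype.card_fin]
      omega⟩

def star3 : Lam 3 → Lam 6 := hstar (by norm_num)
def star4 : Lam 4 → Lam 5 := hstar (by norm_num)
def star6 : Lam 6 → Lam 3 := hstar (by norm_num)
def star8 : Lam 8 → Lam 1 := hstar (by norm_num)

/-- The bilinear form on `Λᵏ(ℂ⁹)` induced by the standard bilinear form of `ℂ⁹`
(the Gram determinant form); the chosen basis is orthonormal for it. -/
def ip {k : ℕ} (u v : Lam k) : ℂ := ∑ s, u s * v s

/-- The standard bilinear form on `ℂ⁹`. -/
def ip9 (x y : Fin 9 → ℂ) : ℂ := ∑ i, x i * y i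

/-- A vector of `ℂ⁹` viewed as an element of `Λ¹(ℂ⁹)`. -/
def vec (x : Fin 9 → ℂ) : Lam 1 := fun s => ∑ i ∈ s.1, x i

/-- An element of `Λ¹(ℂ⁹)` viewed as a vector of `ℂ⁹`. -/
def unvec (u : Lam 1) : Fin 9 → ℂ := fun i => u ⟨{i}, Finset.card_singleton i⟩

/-- The `k × k` minor of `A` with rows `s` and columns `t` (in increasing order). -/
def minor {k : ℕ} (A : Matrix (Fin 9) (Fin 9) ℂ) (s t : Idx k) : ℂ :=
  Matrix.det (Matrix.of fun i j : Fin k =>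
    A (s.1.orderIsoOfFin s.2 i) (t.1.orderIsoOfFin t.2 j))

/-- The natural action of a matrix `A` on `Λᵏ(ℂ⁹)`:
`A(u₁ ∧ ⋯ ∧ u_k) = Au₁ ∧ ⋯ ∧ Au_k`, in coordinates given by minors (Cauchy–Binet). -/
def act {k : ℕ} (A : Matrix (Fin 9) (Fin 9) ℂ) (u : Lam k) : Lam k := fun s =>
  ∑ t, minor A s t * u t

/-- Coordinate matrix of the derivation action of `D` on `Λᵏ(ℂ⁹)`
(the differential of `act` at the identity). -/
def dminor {k : ℕ} (D : Matrix (Fin 9) (Fin 9) ℂ) (s t : Idx k) : ℂ :=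
  ∑ m : Fin k, Matrix.det (Matrix.of fun i j : Fin k =>
    if i = m then D (s.1.orderIsoOfFin s.2 i) (t.1.orderIsoOfFin t.2 j)
    else if (s.1.orderIsoOfFin s.2 i : Fin 9) = (t.1.orderIsoOfFin t.2 j : Fin 9) then 1 else 0)

/-- The derivation action of `D` on `Λᵏ(ℂ⁹)`:
`D(u₁ ∧ u₂ ∧ u₃) = Du₁ ∧ u₂ ∧ u₃ + u₁ ∧ Du₂ ∧ u₃ + u₁ ∧ u₂ ∧ Du₃`. -/
def der {k : ℕ} (D : Matrix (Fin 9) (Fin 9) ℂ) (u : Lam k) : Lam k := fun s =>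
  ∑ t, dminor D s t * u t

/-- The endomorphism `u × v` of `ℂ⁹`: `(u × v)x = ⋆(v ∧ ⋆(u ∧ x)) + (2/3)(u,v)x`. -/
def crossApp (u v : Lam 3) (x : Fin 9 → ℂ) : Fin 9 → ℂ := fun i =>
  unvec (star8 (wedge v (star4 (wedge u (vec x))))) i + (2 / 3 : ℂ) * ip u v * x i

/-- The matrix of the endomorphism `u × v` of `ℂ⁹`. -/
def crossMat (u v : Lam 3) : Matrix (Fin 9) (Fin 9) ℂ :=
  Matrix.of fun i j => crossApp u v (fun l => if l = j then 1 else 0) i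


/-! ### Auxiliary development -/

/-- Proof-free evaluation of a `k`-form on a finset. -/
def ev {k : ℕ} (w : Lam k) (a : Finset (Fin 9)) : ℂ :=
  if h : a.card = k then w ⟨a, h⟩ else 0

lemma ev_apply {k : ℕ} (w : Lam k) (s : Idx k) : w s = ev w s.1 := by
  rw [ev, dif_pos s.2]

/-- Parity count underlying `sgn`. -/
def nn (s t : Finset (Fin 9)) : ℕ := ∑ i ∈ s, (t.filter (fun j => j < i)).card

lemma sgn_eq (s t : Finset (Fin 9)) : sgn s t = (-1 : ℂ) ^ nn s t := rfl

lemma wedge_ev {k l : ℕ} (u : Lam k) (v : Lam l) (w : Idx (k + l)) :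
    wedge u v w = ∑ s : Finset (Fin 9),
      if s ⊆ w.1 ∧ s.card = k then sgn s (w.1 \ s) * ev u s * ev v (w.1 \ s) else 0 := by
  rw [wedge]
  trans (∑ x ∈ (w.1.powerset.filter fun s => s.card = k).attach,
      (fun a => sgn a (w.1 \ a) * ev u a * ev v (w.1 \ a)) x.1)
  · refine Finset.sum_congr rfl fun x _ => ?_
    have hx := x.2
    simp only [Finset.mem_filter, Finset.mem_powerset] at hx
    simp only
    rw [ev, ev, dif_pos hx.2, dif_pos (show (w.1 \ x.1).card = l by
      rw [Finset.card_sdiff, Finset.inter_eq_left.mpr hx.1, w.2, hx.2]; omega)]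
  · rw [Finset.sum_attach _ (fun a => sgn a (w.1 \ a) * ev u a * ev v (w.1 \ a))]
    have h2 : w.1.powerset.filter (fun s => s.card = k)
        = Finset.univ.filter (fun s => s ⊆ w.1 ∧ s.card = k) := by
      ext a; simp
    rw [h2, Finset.sum_filter]

lemma ev_wedge {k l : ℕ} (u : Lam k) (v : Lam l) (a : Finset (Fin 9)) :
    ev (wedge u v) a = if a.card = k + l then (∑ s : Finset (Fin 9),
      if s ⊆ a ∧ s.card = k then sgn s (a \ s) * ev u s * ev v (a \ s) else 0) else 0 := by
  rw [ev]
  split_ifs with h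
  · exact wedge_ev u v ⟨a, h⟩
  · rfl

lemma ev_hstar {k l : ℕ} (h : k + l = 9) (u : Lam k) (a : Finset (Fin 9)) :
    ev (hstar h u) a = if a.card = l then sgn aᶜ a * ev u aᶜ else 0 := by
  rw [ev]
  split_ifs with h'
  · rw [hstar]
    have h'' : aᶜ.card = k := by
      rw [Finset.card_compl, h']; simp only [Fintype.card_fin]; omega
    rw [ev, dif_pos h'']
  · rfl

lemma ev_vec (x : Fin 9 → ℂ) (a : Finset (Fin 9)) :
    ev (vec x) a = if a.card = 1 then ∑ m ∈ a, x m else 0 := by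
  rw [ev]; split_ifs with h
  · rfl
  · rfl

/-- The conditions under which a term survives in the expansion. -/
def condd (i j : Fin 9) (s p : Finset (Fin 9)) : Prop :=
  (s ⊆ ({j} : Finset (Fin 9))ᶜ ∧ s.card = 3) ∧ (({j} : Finset (Fin 9))ᶜ \ s).card = 5 ∧
    ((({j} : Finset (Fin 9))ᶜ \ s)ᶜ).card = 3 + 1 ∧
    (p ⊆ (({j} : Finset (Fin 9))ᶜ \ s)ᶜ ∧ p.card = 3) ∧
    (((({j} : Finset (Fin 9))ᶜ \ s)ᶜ \ p).card = 1) ∧ i ∈ ((({j} : Finset (Fin 9))ᶜ \ s)ᶜ \ p)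

instance (i j : Fin 9) (s p : Finset (Fin 9)) : Decidable (condd i j s p) := by
  unfold condd; infer_instance

/-- Total parity of the signs. -/
def par (i j : Fin 9) (s p : Finset (Fin 9)) : ℕ :=
  nn ({j} : Finset (Fin 9))ᶜ {j} + nn s (({j} : Finset (Fin 9))ᶜ \ s) +
    nn ((({j} : Finset (Fin 9))ᶜ \ s)ᶜ) (({j} : Finset (Fin 9))ᶜ \ s) +
    nn p (((({j} : Finset (Fin 9))ᶜ \ s)ᶜ) \ p)

def Cf (i j : Fin 9) (s p : Finset (Fin 9)) : ℂ :=
  if condd i j s p then (-1 : ℂ) ^ par i j s p else 0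

lemma G_eq (u v : Lam 3) (i j : Fin 9) :
    unvec (star8 (wedge v (star4 (wedge u (vec (fun l => if l = i then 1 else 0)))))) j
      = ∑ s : Finset (Fin 9), ∑ p : Finset (Fin 9), Cf i j s p * ev v s * ev u p := by
  rw [unvec]
  have e0 : (star8 (wedge v (star4 (wedge u (vec (fun l => if l = i then 1 else 0))))))
      ⟨{j}, Finset.card_singleton j⟩
      = ev (star8 (wedge v (star4 (wedge u (vec (fun l => if l = i then 1 else 0)))))) {j} := by
    rw [ev, dif_pos (Finset.card_singleton j)]
  rw [e0, star8, ev_hstar, if_pos (Finset.card_singleton j)]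
  rw [ev_wedge, if_pos (show ({j} : Finset (Fin 9))ᶜ.card = 3 + 5 by
    rw [Finset.card_compl, Finset.card_singleton]; rfl)]
  rw [Finset.mul_sum]
  refine Finset.sum_congr rfl fun s _ => ?_
  by_cases h1 : s ⊆ ({j} : Finset (Fin 9))ᶜ ∧ s.card = 3
  · rw [if_pos h1]
    have hd : (({j} : Finset (Fin 9))ᶜ \ s).card = 5 := by
      rw [Finset.card_sdiff, Finset.inter_eq_left.mpr h1.1, Finset.card_compl, Finset.card_singleton, h1.2]; rfl
    rw [star4, ev_hstar, if_pos hd]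
    have hq : ((({j} : Finset (Fin 9))ᶜ \ s)ᶜ).card = 3 + 1 := by
      rw [Finset.card_compl, hd]; rfl
    rw [ev_wedge, if_pos hq]
    rw [show ∀ (c1 c2 c3 e : ℂ) (g : Finset (Fin 9) → ℂ),
        c1 * (c2 * e * (c3 * ∑ p, g p)) = ∑ p, c1 * (c2 * e * (c3 * g p)) from
      fun c1 c2 c3 e g => by
        rw [Finset.mul_sum, Finset.mul_sum, Finset.mul_sum]]
    refine Finset.sum_congr rfl fun p _ => ?_
    by_cases h2 : p ⊆ (({j} : Finset (Fin 9))ᶜ \ s)ᶜ ∧ p.card = 3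
    · rw [if_pos h2]
      have hr : (((({j} : Finset (Fin 9))ᶜ \ s)ᶜ) \ p).card = 1 := by
        rw [Finset.card_sdiff, Finset.inter_eq_left.mpr h2.1, hq, h2.2]
      rw [ev_vec, if_pos hr]
      rw [Finset.sum_ite_eq' _ i (fun _ => (1 : ℂ))]
      by_cases h3 : i ∈ (((({j} : Finset (Fin 9))ᶜ \ s)ᶜ) \ p)
      · rw [if_pos h3, Cf, if_pos ⟨h1, hd, hq, h2, hr, h3⟩, par,
          sgn_eq, sgn_eq, sgn_eq, sgn_eq, pow_add, pow_add, pow_add]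
        ring
      · rw [if_neg h3, Cf, if_neg (by rintro ⟨_, _, _, _, _, hh⟩; exact h3 hh)]
        ring
    · rw [if_neg h2, Cf, if_neg (by rintro ⟨_, _, _, hh, _, _⟩; exact h2 hh)]
      ring
  · rw [if_neg h1]
    have : ∀ p : Finset (Fin 9), Cf i j s p * ev v s * ev u p = 0 := by
      intro p
      rw [Cf, if_neg (by rintro ⟨hh, _⟩; exact h1 hh)]
      ring
    simp only [this, Finset.sum_const_zero, mul_zero]

def ff (i j : Fin 9) (s : Finset (Fin 9)) : Finset (Fin 9) := (s ∪ {j}).erase i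

lemma qq_eq (j : Fin 9) (s : Finset (Fin 9)) : (({j} : Finset (Fin 9))ᶜ \ s)ᶜ = s ∪ {j} := by
  ext a; simp [or_comm]; tauto

lemma subset_compl_iff (j : Fin 9) (s : Finset (Fin 9)) :
    s ⊆ ({j} : Finset (Fin 9))ᶜ ↔ j ∉ s := by
  constructor
  · intro h hj
    simpa using h hj
  · intro hj a ha
    simp only [Finset.mem_compl, Finset.mem_singleton]
    rintro rfl
    exact hj ha

lemma condd_iff (i j : Fin 9) (s p : Finset (Fin 9)) :
    condd i j s p ↔ (s.card = 3 ∧ j ∉ s ∧ i ∈ s ∪ ({j} : Finset (Fin 9))) ∧ p = ff i j s := by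
  constructor
  · rintro ⟨⟨hsub, hs3⟩, hd, hq, ⟨hpq, hp3⟩, hr1, hir⟩
    rw [qq_eq] at hq hpq hr1 hir
    have hjs : j ∉ s := (subset_compl_iff j s).mp hsub
    have hiq : i ∈ s ∪ {j} := (Finset.mem_sdiff.mp hir).1
    refine ⟨⟨hs3, hjs, hiq⟩, ?_⟩
    obtain ⟨m, hm⟩ := Finset.card_eq_one.mp hr1
    have him : i = m := by
      have := hir; rw [hm] at this; simpa using this
    have : (s ∪ {j}) \ ((s ∪ {j}) \ p) = p := Finset.sdiff_sdiff_eq_self hpq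
    rw [hm, ← him] at this
    rw [ff, Finset.erase_eq, this]
  · rintro ⟨⟨hs3, hjs, hi⟩, rfl⟩
    have hsub : s ⊆ ({j} : Finset (Fin 9))ᶜ := (subset_compl_iff j s).mpr hjs
    have hd : (({j} : Finset (Fin 9))ᶜ \ s).card = 5 := by
      rw [Finset.card_sdiff, Finset.inter_eq_left.mpr hsub, Finset.card_compl, Finset.card_singleton, hs3]; rfl
    have hqcard : (s ∪ ({j} : Finset (Fin 9))).card = 4 := by
      rw [Finset.card_union_of_disjoint (by simpa using hjs), hs3, Finset.card_singleton]
    have hq : ((({j} : Finset (Fin 9))ᶜ \ s)ᶜ).card = 3 + 1 := by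
      rw [qq_eq, hqcard]
    have hpq : ff i j s ⊆ (({j} : Finset (Fin 9))ᶜ \ s)ᶜ := by
      rw [qq_eq, ff]; exact Finset.erase_subset _ _
    have hp3 : (ff i j s).card = 3 := by
      rw [ff, Finset.card_erase_of_mem hi, hqcard]
    have hrs : (({j} : Finset (Fin 9))ᶜ \ s)ᶜ \ ff i j s = {i} := by
      rw [qq_eq, ff]
      ext a
      simp only [Finset.mem_sdiff, Finset.mem_erase, Finset.mem_singleton]
      constructor
      · rintro ⟨ha, hna⟩
        by_contra hne
        exact hna ⟨hne, ha⟩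
      · rintro rfl
        exact ⟨hi, fun h => h.1 rfl⟩
    refine ⟨⟨hsub, hs3⟩, hd, hq, ⟨hpq, hp3⟩, ?_, ?_⟩
    · rw [hrs]; rfl
    · rw [hrs]; exact Finset.mem_singleton_self i

set_option maxRecDepth 10000000 in
set_option maxHeartbeats 12000000 in
lemma key : ∀ i j : Fin 9, ∀ s : Finset (Fin 9),
    (s.card = 3 ∧ j ∉ s ∧ i ∈ s ∪ ({j} : Finset (Fin 9))) →
      ((ff i j s).card = 3 ∧ i ∉ ff i j s ∧ j ∈ ff i j s ∪ ({i} : Finset (Fin 9))) ∧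
        ff j i (ff i j s) = s ∧
        par i j s (ff i j s) % 2 = par j i (ff i j s) s % 2 := by decide

lemma neg_one_pow_congr' {a b : ℕ} (h : a % 2 = b % 2) : ((-1 : ℂ)) ^ a = (-1) ^ b := by
  have ha : ((-1 : ℂ)) ^ a = (-1) ^ (a % 2) := by
    conv_lhs => rw [← Nat.div_add_mod a 2]
    rw [pow_add, pow_mul, neg_one_sq, one_pow, one_mul]
  have hb : ((-1 : ℂ)) ^ b = (-1) ^ (b % 2) := by
    conv_lhs => rw [← Nat.div_add_mod b 2]
    rw [pow_add, pow_mul, neg_one_sq, one_pow, one_mul]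
  rw [ha, hb, h]

lemma condd_forward {i j : Fin 9} {s p : Finset (Fin 9)} (h : condd i j s p) :
    condd j i p s ∧ par i j s p % 2 = par j i p s % 2 := by
  obtain ⟨h3, hp⟩ := (condd_iff i j s p).mp h
  obtain ⟨k1, k2, k3⟩ := key i j s h3
  subst hp
  exact ⟨(condd_iff j i (ff i j s) s).mpr ⟨k1, k2.symm⟩, k3⟩

lemma Cf_symm (i j : Fin 9) (s p : Finset (Fin 9)) : Cf i j s p = Cf j i p s := by
  by_cases h : condd i j s p
  · obtain ⟨h2, hpar⟩ := condd_forward h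
    rw [Cf, Cf, if_pos h, if_pos h2]
    exact neg_one_pow_congr' hpar
  · have h2 : ¬ condd j i p s := fun hc => h (condd_forward hc).1
    rw [Cf, Cf, if_neg h, if_neg h2]


/-- `(u × v)ᵀ = v × u`. -/
theorem stmt7 (u v : Lam 3) : (crossMat u v)ᵀ = crossMat v u := by
  ext i j
  show crossMat u v j i = crossMat v u i j
  show crossApp u v (fun l => if l = i then 1 else 0) j
      = crossApp v u (fun l => if l = j then 1 else 0) i
  rw [crossApp, crossApp, G_eq, G_eq]
  congr 1
  · rw [Finset.sum_comm]
    refine Finset.sum_congr rfl fun s _ => Finset.sum_congr rfl fun p _ => ?_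
    rw [Cf_symm]
    ring
  · have hip : ip u v = ip v u := by
      rw [ip, ip]
      exact Finset.sum_congr rfl fun s _ => mul_comm _ _
    rw [hip]
    congr 1
    by_cases h : i = j
    · subst h; rfl
    · rw [if_neg h, if_neg (fun hh => h hh.symm)]



end
end

section
/- The Lie algebra g = sl(9,ℂ) ⊕ Λ³(ℂ⁹) ⊕ Λ³(ℂ⁹) with the bracket [(D₁,u₁,v₁),(D₂,u₂,v₂)] = ([D₁,D₂] + u₁×v₂ − u₂×v₁, D₁u₂ − D₂u₁ + *(v₁∧v₂), −D₁ᵀv₂ + D₂ᵀv₁ − *(u₁∧u₂)) is simple: every nonzero ideal of g equals g. -/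
open scoped BigOperators
open Matrix

noncomputable section

/-- The ambient product space containing `g = sl(9,ℂ) ⊕ Λ³(ℂ⁹) ⊕ Λ³(ℂ⁹)`. -/
abbrev P : Type := Matrix (Fin 9) (Fin 9) ℂ × Lam 3 × Lam 3

/-- The subspace `g = sl(9,ℂ) ⊕ Λ³(ℂ⁹) ⊕ Λ³(ℂ⁹)` (traceless first component). -/
def g0 : Submodule ℂ P :=
  LinearMap.ker ((Matrix.traceLinearMap (Fin 9) ℂ ℂ).comp
    (LinearMap.fst ℂ (Matrix (Fin 9) (Fin 9) ℂ) (Lam 3 × Lam 3)))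

/-- The bracket `[(D₁,u₁,v₁),(D₂,u₂,v₂)] = ([D₁,D₂] + u₁×v₂ − u₂×v₁,
D₁u₂ − D₂u₁ + ⋆(v₁∧v₂), −D₁ᵀv₂ + D₂ᵀv₁ − ⋆(u₁∧u₂))`. -/
def ebr (R S : P) : P :=
  (R.1 * S.1 - S.1 * R.1 + crossMat R.2.1 S.2.2 - crossMat S.2.1 R.2.2,
   der R.1 S.2.1 - der S.1 R.2.1 + star6 (wedge R.2.2 S.2.2),
   - der R.1ᵀ S.2.2 + der S.1ᵀ R.2.2 - star6 (wedge R.2.1 S.2.1))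

namespace Aux

/-- basis vector of `Lam k` -/
def eb {k : ℕ} (S : Idx k) : Lam k := fun T => if T = S then 1 else 0

lemma sgn_ne_zero (s t : Finset (Fin 9)) : sgn s t ≠ 0 := by
  unfold sgn; exact pow_ne_zero _ (by norm_num)

lemma wedge_zero_left {k l : ℕ} (v : Lam l) : wedge (0 : Lam k) v = 0 := by
  funext w
  simp [wedge]

lemma wedge_zero_right {k l : ℕ} (u : Lam k) : wedge u (0 : Lam l) = 0 := by
  funext w
  simp [wedge]

lemma hstar_zero {k l : ℕ} (h : k + l = 9) : hstar h (0 : Lam k) = 0 := by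
  funext t; simp [hstar]

lemma hstar_smul {k l : ℕ} (h : k + l = 9) (c : ℂ) (u : Lam k) :
    hstar h (c • u) = c • hstar h u := by
  funext t; simp [hstar]; ring

lemma wedge_smul_right {k l : ℕ} (u : Lam k) (c : ℂ) (v : Lam l) :
    wedge u (c • v) = c • wedge u v := by
  funext w
  simp [wedge, Finset.mul_sum]
  exact Finset.sum_congr rfl fun s _ => by ring

lemma unvec_zero : unvec 0 = 0 := by funext i; rfl

lemma unvec_smul (c : ℂ) (u : Lam 1) : unvec (c • u) = c • unvec u := by
  funext i; rfl

lemma ip_zero_left {k : ℕ} (v : Lam k) : ip (0 : Lam k) v = 0 := by simp [ip]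

lemma ip_zero_right {k : ℕ} (u : Lam k) : ip u (0 : Lam k) = 0 := by
  simp [ip]

lemma crossMat_zero_left (v : Lam 3) : crossMat 0 v = 0 := by
  ext i j
  simp only [crossMat, crossApp, ip_zero_left, Matrix.of_apply, mul_zero, zero_mul, add_zero]
  rw [wedge_zero_left, show star4 (0 : Lam 4) = 0 from hstar_zero _, wedge_zero_right,
    show star8 (0 : Lam 8) = 0 from hstar_zero _, unvec_zero]
  rfl

lemma crossMat_zero_right (u : Lam 3) : crossMat u 0 = 0 := by
  ext i j
  simp only [crossMat, crossApp, ip_zero_right, Matrix.of_apply, mul_zero, zero_mul, add_zero]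
  rw [wedge_zero_left, show star8 (0 : Lam 8) = 0 from hstar_zero _, unvec_zero]
  rfl

lemma dminor_zero {k : ℕ} (s t : Idx k) : dminor (0 : Matrix (Fin 9) (Fin 9) ℂ) s t = 0 := by
  unfold dminor
  refine Finset.sum_eq_zero fun m _ => ?_
  apply Matrix.det_eq_zero_of_row_eq_zero m
  intro j
  simp

lemma der_zero_mat {k : ℕ} (u : Lam k) : der (0 : Matrix (Fin 9) (Fin 9) ℂ) u = 0 := by
  funext s; simp [der, dminor_zero]

lemma der_zero {k : ℕ} (D : Matrix (Fin 9) (Fin 9) ℂ) : der D (0 : Lam k) = 0 := by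
  funext s; simp [der]

end Aux
namespace Aux

lemma wedge_eb {k l : ℕ} (S : Idx k) (T : Idx l) (w : Idx (k + l)) :
    wedge (eb S) (eb T) w =
      if S.1 ⊆ w.1 ∧ w.1 \ S.1 = T.1 then sgn S.1 T.1 else 0 := by
  unfold wedge
  by_cases hc : S.1 ⊆ w.1 ∧ w.1 \ S.1 = T.1
  · rw [if_pos hc]
    have hmem : S.1 ∈ w.1.powerset.filter fun s => s.card = k := by
      simp [Finset.mem_powerset, hc.1, S.2]
    rw [Finset.sum_eq_single ⟨S.1, hmem⟩]
    · simp [eb, hc.2]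
    · intro b _ hb
      have hb1 : b.1 ≠ S.1 := fun h => hb (Subtype.ext h)
      simp only [eb, mul_ite, mul_one, mul_zero, ite_mul, zero_mul]
      split_ifs with h1 h2
      · exact absurd (congrArg Subtype.val h2) hb1
      all_goals rfl
    · intro h
      exact absurd (Finset.mem_attach _ _) h
  · rw [if_neg hc]
    refine Finset.sum_eq_zero fun b _ => ?_
    simp only [eb, mul_ite, mul_one, mul_zero, ite_mul, zero_mul]
    split_ifs with h1 h2
    · have hbmem := b.2
      simp only [Finset.mem_filter, Finset.mem_powerset] at hbmem
      have h2' : b.1 = S.1 := congrArg Subtype.val h2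
      have h1' : w.1 \ b.1 = T.1 := congrArg Subtype.val h1
      exact absurd ⟨h2' ▸ hbmem.1, h2' ▸ h1'⟩ hc
    all_goals rfl

lemma vec_delta (j : Fin 9) :
    vec (fun l => if l = j then 1 else 0) = eb ⟨{j}, Finset.card_singleton j⟩ := by
  funext s
  obtain ⟨a, ha⟩ := Finset.card_eq_one.mp s.2
  have hs : s = ⟨{a}, Finset.card_singleton a⟩ := Subtype.ext ha
  rw [hs]
  simp only [_root_.vec, eb, Finset.sum_singleton, Subtype.mk.injEq, Finset.singleton_inj]

lemma ip_eb (S : Idx 3) : ip (eb S) (eb S) = 1 := by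
  simp [ip, eb]

lemma dminor_diagonal {k : ℕ} (c : Fin 9 → ℂ) (s t : Idx k) :
    dminor (Matrix.diagonal c) s t = if s = t then (∑ i ∈ s.1, c i) else 0 := by
  unfold dminor
  have key : ∀ m : Fin k,
      (Matrix.of fun i j : Fin k =>
        if i = m then Matrix.diagonal c (s.1.orderIsoOfFin s.2 i) (t.1.orderIsoOfFin t.2 j)
        else if ((s.1.orderIsoOfFin s.2 i : Fin 9) = (t.1.orderIsoOfFin t.2 j : Fin 9)) then 1 else 0)
      = Matrix.of fun i j : Fin k =>
        (if i = m then c (s.1.orderIsoOfFin s.2 i) else 1) *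
          (if ((s.1.orderIsoOfFin s.2 i : Fin 9) = (t.1.orderIsoOfFin t.2 j : Fin 9)) then 1 else 0) := by
    intro m
    ext i j
    simp only [Matrix.of_apply, Matrix.diagonal_apply]
    by_cases him : i = m <;> by_cases heq : ((s.1.orderIsoOfFin s.2 i : Fin 9) = (t.1.orderIsoOfFin t.2 j : Fin 9)) <;>
      simp [him, heq]
  simp only [key]
  simp only [Matrix.det_mul_column _ (fun i j : Fin k =>
    (if ((s.1.orderIsoOfFin s.2 i : Fin 9) = (t.1.orderIsoOfFin t.2 j : Fin 9)) then (1:ℂ) else 0))]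
  by_cases hst : s = t
  · subst hst
    rw [if_pos rfl]
    have hdet : Matrix.det (fun i j : Fin k =>
        if ((s.1.orderIsoOfFin s.2 i : Fin 9) = (s.1.orderIsoOfFin s.2 j : Fin 9)) then (1:ℂ) else 0)
        = 1 := by
      have h1 : (fun i j : Fin k =>
          if ((s.1.orderIsoOfFin s.2 i : Fin 9) = (s.1.orderIsoOfFin s.2 j : Fin 9)) then (1:ℂ) else 0)
          = (1 : Matrix (Fin k) (Fin k) ℂ) := by
        funext i j
        have hiff : ((s.1.orderIsoOfFin s.2 i : Fin 9) = (s.1.orderIsoOfFin s.2 j : Fin 9)) ↔ i = j := by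
          rw [Subtype.coe_inj]
          exact ⟨fun h => (s.1.orderIsoOfFin s.2).injective h, fun h => h ▸ rfl⟩
        rw [show (1 : Matrix (Fin k) (Fin k) ℂ) i j = if i = j then 1 else 0 from Matrix.one_apply]
        by_cases h : i = j <;> simp [h, hiff]
      rw [h1, Matrix.det_one]
    rw [hdet]
    simp only [mul_one]
    have hprod : ∀ m : Fin k, (∏ i, if i = m then c (s.1.orderIsoOfFin s.2 i) else 1)
        = c (s.1.orderIsoOfFin s.2 m) := by
      intro m
      rw [Finset.prod_ite_eq' Finset.univ m (fun i => c (s.1.orderIsoOfFin s.2 i))]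
      simp
    simp only [hprod]
    rw [← Finset.sum_coe_sort s.1 c]
    exact Fintype.sum_equiv (s.1.orderIsoOfFin s.2).toEquiv _ _ (fun m => rfl)
  · rw [if_neg hst]
    have hsub : ¬ s.1 ⊆ t.1 := by
      intro h
      exact hst (Subtype.ext (Finset.eq_of_subset_of_card_le h (by rw [s.2, t.2])))
    obtain ⟨x, hxs, hxt⟩ := Finset.not_subset.mp hsub
    set i0 := (s.1.orderIsoOfFin s.2).symm ⟨x, hxs⟩ with hi0
    have hxi0 : (s.1.orderIsoOfFin s.2 i0 : Fin 9) = x := by rw [hi0]; simp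
    refine Finset.sum_eq_zero fun m _ => ?_
    rw [mul_eq_zero]; right
    apply Matrix.det_eq_zero_of_row_eq_zero i0
    intro j
    have hne : ¬ ((s.1.orderIsoOfFin s.2 i0 : Fin 9) = (t.1.orderIsoOfFin t.2 j : Fin 9)) := by
      rw [hxi0]
      intro h
      exact hxt (h ▸ (t.1.orderIsoOfFin t.2 j).2)
    exact if_neg hne

lemma der_diagonal {k : ℕ} (c : Fin 9 → ℂ) (u : Lam k) :
    der (Matrix.diagonal c) u = fun s => (∑ i ∈ s.1, c i) * u s := by
  funext s
  simp only [der, dminor_diagonal]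
  rw [Finset.sum_eq_single s]
  · simp
  · intro b _ hb; simp [Ne.symm hb]
  · intro h; exact absurd (Finset.mem_univ _) h

end Aux
namespace Aux

lemma wedge_eb_disjoint {k l : ℕ} (S : Idx k) (T : Idx l) (hd : Disjoint S.1 T.1)
    (W : Idx (k + l)) (hW : W.1 = S.1 ∪ T.1) :
    wedge (eb S) (eb T) = sgn S.1 T.1 • eb W := by
  funext w
  rw [wedge_eb]
  have hiff : (S.1 ⊆ w.1 ∧ w.1 \ S.1 = T.1) ↔ w.1 = S.1 ∪ T.1 := by
    constructor
    · rintro ⟨h1, h2⟩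
      rw [← h2, Finset.union_sdiff_of_subset h1]
    · intro h3
      refine ⟨h3 ▸ Finset.subset_union_left, ?_⟩
      rw [h3, Finset.union_sdiff_cancel_left hd]
  by_cases h3 : w.1 = S.1 ∪ T.1
  · rw [if_pos (hiff.mpr h3)]
    have hw : w = W := Subtype.ext (h3.trans hW.symm)
    simp [eb, hw]
  · rw [if_neg (fun hcc => h3 (hiff.mp hcc))]
    have hw : w ≠ W := fun hh => h3 ((congrArg Subtype.val hh).trans hW)
    simp [eb, hw]

lemma hstar_eb {k l : ℕ} (h : k + l = 9) (W : Idx k) (hc : W.1ᶜ.card = l) :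
    hstar h (eb W) = sgn W.1 W.1ᶜ • eb ⟨W.1ᶜ, hc⟩ := by
  funext t
  simp only [hstar, eb, Pi.smul_apply, smul_eq_mul]
  by_cases ht : t.1 = W.1ᶜ
  · have ht2 : t.1ᶜ = W.1 := by rw [ht, compl_compl]
    have h1 : (⟨t.1ᶜ, by rw [Finset.card_compl, t.2]; simp only [Fintype.card_fin]; omega⟩ : Idx k) = W :=
      Subtype.ext ht2
    have h2 : t = (⟨W.1ᶜ, hc⟩ : Idx l) := Subtype.ext ht
    rw [if_pos h1, if_pos h2, ht2, ht]
  · have h1 : (⟨t.1ᶜ, by rw [Finset.card_compl, t.2]; simp only [Fintype.card_fin]; omega⟩ : Idx k) ≠ W := by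
      intro hh
      have := congrArg Subtype.val hh
      simp only at this
      exact ht (by rw [← this, compl_compl])
    have h2 : t ≠ (⟨W.1ᶜ, hc⟩ : Idx l) := fun hh => ht (congrArg Subtype.val hh)
    rw [if_neg h1, if_neg h2]
    ring

lemma star4_smul (c : ℂ) (u : Lam 4) : star4 (c • u) = c • star4 u := hstar_smul _ c u
lemma star8_smul (c : ℂ) (u : Lam 8) : star8 (c • u) = c • star8 u := hstar_smul _ c u
lemma star4_eb (W : Idx 4) (hc : W.1ᶜ.card = 5) : star4 (eb W) = sgn W.1 W.1ᶜ • eb ⟨W.1ᶜ, hc⟩ :=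
  hstar_eb _ W hc
lemma star8_eb (W : Idx 8) (hc : W.1ᶜ.card = 1) : star8 (eb W) = sgn W.1 W.1ᶜ • eb ⟨W.1ᶜ, hc⟩ :=
  hstar_eb _ W hc

lemma crossterm_mem (S : Idx 3) (j : Fin 9) (hj : j ∈ S.1) :
    unvec (star8 (wedge (eb S) (star4 (wedge (eb S)
      (vec (fun l => if l = j then 1 else 0)))))) = 0 := by
  rw [vec_delta]
  have hw : wedge (eb S) (eb ⟨{j}, Finset.card_singleton j⟩) = (0 : Lam 4) := by
    funext w
    rw [wedge_eb]
    rw [if_neg]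
    · rfl
    · rintro ⟨h1, h2⟩
      have : j ∈ w.1 \ S.1 := h2 ▸ Finset.mem_singleton_self j
      exact (Finset.mem_sdiff.mp this).2 hj
  rw [hw]
  rw [show star4 (0 : Lam 4) = 0 from hstar_zero _]
  rw [wedge_zero_right]
  funext i
  simp [unvec, star8, hstar]

lemma crossterm_notmem (S : Idx 3) (j : Fin 9) (hj : j ∉ S.1) :
    ∃ ε : ℂ, ε ≠ 0 ∧ ∀ i, unvec (star8 (wedge (eb S) (star4 (wedge (eb S)
      (vec (fun l => if l = j then 1 else 0)))))) i = ε * (if i = j then 1 else 0) := by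
  have hd1 : Disjoint S.1 ({j} : Finset (Fin 9)) := by
    simp [Finset.disjoint_singleton_right, hj]
  have hc4 : (S.1 ∪ {j}).card = 4 := by
    rw [Finset.card_union_of_disjoint hd1, S.2, Finset.card_singleton]
  set X4 : Idx 4 := ⟨S.1 ∪ {j}, hc4⟩ with hX4
  have hA : wedge (eb S) (eb ⟨{j}, Finset.card_singleton j⟩) = (sgn S.1 {j} • eb X4 : Lam 4) :=
    wedge_eb_disjoint S ⟨{j}, Finset.card_singleton j⟩ hd1 X4 rfl
  have hc5 : (X4.1ᶜ).card = 5 := by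
    rw [Finset.card_compl, hc4]; rfl
  set X5 : Idx 5 := ⟨X4.1ᶜ, hc5⟩ with hX5
  have hd2 : Disjoint S.1 X5.1 := by
    rw [hX5]
    simp only [Finset.disjoint_right]
    intro a ha
    simp only [Finset.mem_compl, hX4, Finset.mem_union, not_or] at ha
    exact fun hb => ha.1 hb
  have hc8 : (S.1 ∪ X5.1).card = 8 := by
    rw [Finset.card_union_of_disjoint hd2, S.2, hX5]
    rw [hc5]
  have hSU : S.1 ∪ X5.1 = ({j} : Finset (Fin 9))ᶜ := by
    ext x
    simp only [hX5, hX4, Finset.mem_union, Finset.mem_compl, Finset.mem_singleton,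
      Finset.mem_union, not_or]
    constructor
    · rintro (hx | ⟨hx1, hx2⟩)
      · intro he; exact hj (he ▸ hx)
      · exact hx2
    · intro hx
      by_cases hxS : x ∈ S.1
      · exact Or.inl hxS
      · exact Or.inr ⟨hxS, hx⟩
  have hc8' : (({j} : Finset (Fin 9))ᶜ).card = 8 := by rw [← hSU]; exact hc8
  set X8 : Idx 8 := ⟨({j} : Finset (Fin 9))ᶜ, hc8'⟩ with hX8
  have hC : wedge (eb S) (eb X5) = (sgn S.1 X5.1 • eb X8 : Lam 8) :=
    wedge_eb_disjoint S X5 hd2 X8 hSU.symm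
  have hc1 : (X8.1ᶜ).card = 1 := by
    rw [hX8, compl_compl, Finset.card_singleton]
  refine ⟨sgn S.1 {j} * sgn X4.1 X4.1ᶜ * sgn S.1 X5.1 * sgn X8.1 X8.1ᶜ, ?_, ?_⟩
  · exact mul_ne_zero (mul_ne_zero (mul_ne_zero (sgn_ne_zero _ _) (sgn_ne_zero _ _))
      (sgn_ne_zero _ _)) (sgn_ne_zero _ _)
  intro i
  rw [vec_delta, hA, star4_smul, star4_eb X4 hc5, smul_smul]
  rw [show (⟨X4.1ᶜ, hc5⟩ : Idx 5) = X5 from rfl]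
  rw [wedge_smul_right, hC, smul_smul, star8_smul, star8_eb X8 hc1, smul_smul, unvec_smul]
  have hX1 : (⟨X8.1ᶜ, hc1⟩ : Idx 1) = ⟨{j}, Finset.card_singleton j⟩ :=
    Subtype.ext (compl_compl {j})
  rw [hX1]
  simp only [Pi.smul_apply, smul_eq_mul, unvec, eb, Subtype.mk.injEq, Finset.singleton_inj]

end Aux
namespace Aux

lemma crossMat_eb (S : Idx 3) : ∃ d : Fin 9 → ℂ,
    crossMat (eb S) (eb S) = Matrix.diagonal d ∧ (∀ j ∈ S.1, d j = 2/3) ∧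
      ∀ j ∉ S.1, d j ≠ 2/3 := by
  have key : ∀ j : Fin 9, ∃ c : ℂ, (j ∈ S.1 → c = 2/3) ∧ (j ∉ S.1 → c ≠ 2/3) ∧
      ∀ i, crossMat (eb S) (eb S) i j = if i = j then c else 0 := by
    intro j
    by_cases hj : j ∈ S.1
    · refine ⟨2/3, fun _ => rfl, fun h => absurd hj h, fun i => ?_⟩
      simp only [crossMat, crossApp, Matrix.of_apply]
      rw [ip_eb, crossterm_mem S j hj]
      simp only [Pi.zero_apply, zero_add, mul_one]
      by_cases h : i = j <;> simp [h]
    · obtain ⟨ε, hε, hterm⟩ := crossterm_notmem S j hj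
      refine ⟨ε + 2/3, fun h => absurd h hj, fun _ => ?_, fun i => ?_⟩
      · intro hh
        apply hε
        have := add_right_cancel (hh.trans (zero_add (2/3 : ℂ)).symm)
        exact this
      · simp only [crossMat, crossApp, Matrix.of_apply]
        rw [ip_eb, hterm i]
        by_cases h : i = j <;> simp [h] <;> ring
  choose d hd1 hd2 hd3 using key
  refine ⟨d, ?_, hd1, hd2⟩
  ext i j
  rw [hd3 j i, Matrix.diagonal_apply]
  by_cases h : i = j
  · subst h; simp
  · simp [h]

lemma ebr_mat_mat (A B : Matrix (Fin 9) (Fin 9) ℂ) :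
    ebr (A, 0, 0) (B, 0, 0) = (A * B - B * A, 0, 0) := by
  simp only [ebr, crossMat_zero_left, crossMat_zero_right, der_zero, Matrix.transpose_zero,
    der_zero_mat]
  refine Prod.ext ?_ (Prod.ext ?_ ?_)
  · simp
  · funext s
    simp [wedge_zero_left, star6, hstar]
  · funext s
    simp [wedge_zero_left, star6, hstar]

lemma ebr_u_v (u v : Lam 3) :
    ebr ((0 : Matrix (Fin 9) (Fin 9) ℂ), u, 0) ((0 : Matrix (Fin 9) (Fin 9) ℂ), 0, v) =
      (crossMat u v, 0, 0) := by
  simp only [ebr, crossMat_zero_left, crossMat_zero_right, der_zero, Matrix.transpose_zero,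
    der_zero_mat]
  refine Prod.ext ?_ (Prod.ext ?_ ?_)
  · simp
  · funext s
    simp [wedge_zero_left, star6, hstar]
  · funext s
    simp [wedge_zero_right, star6, hstar]

lemma ebr_v_u (u v : Lam 3) :
    ebr ((0 : Matrix (Fin 9) (Fin 9) ℂ), 0, v) ((0 : Matrix (Fin 9) (Fin 9) ℂ), u, 0) =
      (- crossMat u v, 0, 0) := by
  simp only [ebr, crossMat_zero_left, crossMat_zero_right, der_zero, Matrix.transpose_zero,
    der_zero_mat]
  refine Prod.ext ?_ (Prod.ext ?_ ?_)
  · simp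
  · funext s
    simp [wedge_zero_right, star6, hstar]
  · funext s
    simp [wedge_zero_left, star6, hstar]

lemma ebr_u_mat (u : Lam 3) (B : Matrix (Fin 9) (Fin 9) ℂ) :
    ebr ((0 : Matrix (Fin 9) (Fin 9) ℂ), u, 0) (B, 0, 0) = (0, - der B u, 0) := by
  simp only [ebr, crossMat_zero_left, crossMat_zero_right, der_zero, Matrix.transpose_zero,
    der_zero_mat]
  refine Prod.ext ?_ (Prod.ext ?_ ?_)
  · simp
  · funext s
    simp [wedge_zero_left, star6, hstar]
  · funext s
    simp [wedge_zero_right, star6, hstar]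

lemma ebr_v_mat (v : Lam 3) (B : Matrix (Fin 9) (Fin 9) ℂ) :
    ebr ((0 : Matrix (Fin 9) (Fin 9) ℂ), 0, v) (B, 0, 0) = (0, 0, der Bᵀ v) := by
  simp only [ebr, crossMat_zero_left, crossMat_zero_right, der_zero, Matrix.transpose_zero,
    der_zero_mat]
  refine Prod.ext ?_ (Prod.ext ?_ ?_)
  · simp
  · funext s
    simp [wedge_zero_right, star6, hstar]
  · funext s
    simp [wedge_zero_left, star6, hstar]

lemma ebr_diag (c : Fin 9 → ℂ) (X : P) :
    ebr (Matrix.diagonal c, 0, 0) X =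
      (Matrix.diagonal c * X.1 - X.1 * Matrix.diagonal c,
       der (Matrix.diagonal c) X.2.1, - der (Matrix.diagonal c) X.2.2) := by
  simp only [ebr, crossMat_zero_left, crossMat_zero_right, der_zero, Matrix.diagonal_transpose,
    der_zero_mat]
  refine Prod.ext ?_ (Prod.ext ?_ ?_)
  · simp
  · funext s
    simp [wedge_zero_left, star6, hstar]
  · funext s
    simp [wedge_zero_left, star6, hstar]

end Aux
namespace Aux

def tz : Fin 9 → ℤ := fun i => 9 * 2 ^ (i : ℕ) - 511
def tC : Fin 9 → ℂ := fun i => (tz i : ℂ)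
def sz (S : Idx 3) : ℤ := ∑ i ∈ S.1, tz i
def sC (S : Idx 3) : ℂ := ∑ i ∈ S.1, tC i

lemma sC_eq (S : Idx 3) : sC S = ((sz S : ℤ) : ℂ) := by
  simp [sC, sz, tC]

lemma tz_sum : (∑ i : Fin 9, tz i) = 0 := by decide

lemma Z0 : ∀ i j : Fin 9, i ≠ j → tz i ≠ tz j := by decide

lemma Z1 : ∀ i j k l : Fin 9, i ≠ j → tz i - tz j = tz k - tz l → i = k ∧ j = l := by decide

lemma zsum (S : Idx 3) : sz S = 9 * (∑ i ∈ S.1, (2:ℤ) ^ (i : ℕ)) - 1533 := by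
  unfold sz tz
  rw [Finset.sum_sub_distrib, ← Finset.mul_sum, Finset.sum_const, S.2]
  norm_num

lemma Z2 : ∀ (i j : Fin 9) (S : Idx 3), sz S ≠ tz i - tz j := by
  intro i j S
  rw [zsum]
  unfold tz
  generalize (∑ i ∈ S.1, (2:ℤ) ^ (i : ℕ)) = a
  generalize ((2:ℤ) ^ (i : ℕ)) = p
  generalize ((2:ℤ) ^ (j : ℕ)) = q
  omega

lemma Z5 : ∀ S T : Idx 3, sz S ≠ -sz T := by
  intro S T
  rw [zsum, zsum]
  generalize (∑ i ∈ S.1, (2:ℤ) ^ (i : ℕ)) = a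
  generalize (∑ i ∈ T.1, (2:ℤ) ^ (i : ℕ)) = b
  omega

lemma Z4 : ∀ S T : Idx 3, sz S = sz T → S = T := by
  intro S T h
  rw [zsum, zsum] at h
  have h2 : (∑ i ∈ S.1, (2:ℤ) ^ (i : ℕ)) = ∑ i ∈ T.1, (2:ℤ) ^ (i : ℕ) := by omega
  have h3 : ((∑ i ∈ S.1, (2:ℕ) ^ (i : ℕ) : ℕ) : ℤ) = ((∑ i ∈ T.1, (2:ℕ) ^ (i : ℕ) : ℕ) : ℤ) := by
    push_cast
    exact h2
  have h4 : (∑ i ∈ S.1, (2:ℕ) ^ (i : ℕ)) = ∑ i ∈ T.1, (2:ℕ) ^ (i : ℕ) := Nat.cast_injective h3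
  have h5 : (∑ i ∈ S.1.map ⟨Fin.val, Fin.val_injective⟩, 2 ^ i)
      = ∑ i ∈ T.1.map ⟨Fin.val, Fin.val_injective⟩, 2 ^ i := by
    rw [Finset.sum_map, Finset.sum_map]
    exact h4
  have h6 := Finset.geomSum_injective (le_refl 2) h5
  exact Subtype.ext (Finset.map_injective _ h6)

end Aux
namespace Aux

open scoped Classical

noncomputable def allW : List ℂ :=
  ((Finset.univ : Finset (Fin 9 × Fin 9)).toList.map fun p => tC p.1 - tC p.2)
    ++ ((Finset.univ : Finset (Idx 3)).toList.map fun S => sC S)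
    ++ ((Finset.univ : Finset (Idx 3)).toList.map fun S => -sC S)

lemma memW1 (i j : Fin 9) : tC i - tC j ∈ allW := by
  unfold allW
  rw [List.mem_append, List.mem_append]
  exact Or.inl (Or.inl (List.mem_map.mpr ⟨(i, j), Finset.mem_toList.mpr (Finset.mem_univ _), rfl⟩))

lemma memW2 (S : Idx 3) : sC S ∈ allW := by
  unfold allW
  rw [List.mem_append, List.mem_append]
  exact Or.inl (Or.inr (List.mem_map.mpr ⟨S, Finset.mem_toList.mpr (Finset.mem_univ _), rfl⟩))

lemma memW3 (S : Idx 3) : -sC S ∈ allW := by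
  unfold allW
  rw [List.mem_append]
  exact Or.inr (List.mem_map.mpr ⟨S, Finset.mem_toList.mpr (Finset.mem_univ _), rfl⟩)

noncomputable def HD : P := (Matrix.diagonal tC, (0 : Lam 3), (0 : Lam 3))

lemma mem_g0_iff (X : P) : X ∈ g0 ↔ Matrix.trace X.1 = 0 := by
  simp [g0, LinearMap.mem_ker]

lemma HD_g0 : HD ∈ g0 := by
  rw [mem_g0_iff]
  show Matrix.trace (Matrix.diagonal tC) = 0
  rw [Matrix.trace_diagonal]
  have : (∑ i : Fin 9, tC i) = ((∑ i : Fin 9, tz i : ℤ) : ℂ) := by push_cast [tC]; rfl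
  rw [this, tz_sum]
  exact Int.cast_zero

noncomputable def polyApply (l : List ℂ) (X : P) : P :=
  l.foldr (fun lam Y => ebr HD Y - lam • Y) X

lemma polyApply_mem (I : Submodule ℂ P)
    (hideal : ∀ R ∈ g0, ∀ S ∈ I, ebr R S ∈ I) (l : List ℂ) (X : P) (hX : X ∈ I) :
    polyApply l X ∈ I := by
  induction l with
  | nil => exact hX
  | cons lam l ih =>
    exact Submodule.sub_mem I (hideal HD HD_g0 _ ih) (Submodule.smul_mem I lam ih)

lemma polyApply_fst (l : List ℂ) (X : P) (i j : Fin 9) :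
    (polyApply l X).1 i j = ((l.map fun lam => (tC i - tC j) - lam).prod) * X.1 i j := by
  induction l with
  | nil => simp [polyApply]
  | cons lam l ih =>
    show ((ebr HD (polyApply l X) - lam • polyApply l X)).1 i j = _
    rw [Prod.fst_sub, Prod.smul_fst]
    unfold HD
    rw [ebr_diag]
    simp only [Matrix.sub_apply, Matrix.smul_apply, Matrix.diagonal_mul, Matrix.mul_diagonal]
    rw [ih, List.map_cons, List.prod_cons]
    simp only [smul_eq_mul]
    ring

lemma polyApply_snd1 (l : List ℂ) (X : P) (S : Idx 3) :
    (polyApply l X).2.1 S = ((l.map fun lam => sC S - lam).prod) * X.2.1 S := by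
  induction l with
  | nil => simp [polyApply]
  | cons lam l ih =>
    show ((ebr HD (polyApply l X) - lam • polyApply l X)).2.1 S = _
    rw [Prod.snd_sub, Prod.smul_snd, Prod.fst_sub, Prod.smul_fst]
    unfold HD
    rw [ebr_diag]
    simp only [Pi.sub_apply, Pi.smul_apply, smul_eq_mul]
    rw [der_diagonal]
    simp only
    rw [ih, List.map_cons, List.prod_cons]
    show sC S * _ - _ = _
    ring

lemma polyApply_snd2 (l : List ℂ) (X : P) (S : Idx 3) :
    (polyApply l X).2.2 S = ((l.map fun lam => -sC S - lam).prod) * X.2.2 S := by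
  induction l with
  | nil => simp [polyApply]
  | cons lam l ih =>
    show ((ebr HD (polyApply l X) - lam • polyApply l X)).2.2 S = _
    rw [Prod.snd_sub, Prod.smul_snd, Prod.snd_sub, Prod.smul_snd]
    unfold HD
    rw [ebr_diag]
    simp only [Pi.sub_apply, Pi.smul_apply, smul_eq_mul, Pi.neg_apply]
    rw [der_diagonal]
    simp only
    rw [ih, List.map_cons, List.prod_cons]
    show -(sC S * _) - _ = _
    ring

end Aux
namespace Aux

open scoped Classical

lemma castinj {a b : ℤ} (h : (a : ℂ) = (b : ℂ)) : a = b := by exact_mod_cast h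

lemma tC_sub (i j : Fin 9) : tC i - tC j = ((tz i - tz j : ℤ) : ℂ) := by
  push_cast [tC]; ring

lemma C0 {i j : Fin 9} (h : i ≠ j) : tC i ≠ tC j := by
  intro hc
  exact Z0 i j h (castinj hc)

lemma C1 {i j k l : Fin 9} (hij : i ≠ j) (h : tC i - tC j = tC k - tC l) : i = k ∧ j = l := by
  rw [tC_sub, tC_sub] at h
  exact Z1 i j k l hij (castinj h)

lemma C2 (i j : Fin 9) (S : Idx 3) : sC S ≠ tC i - tC j := by
  rw [sC_eq, tC_sub]
  intro h
  exact Z2 i j S (castinj h)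

lemma C3 (i j : Fin 9) (S : Idx 3) : -sC S ≠ tC i - tC j := by
  intro h
  apply C2 j i S
  rw [show sC S = -(tC i - tC j) from by rw [← h]; ring]
  ring

lemma C5 (S T : Idx 3) : sC S ≠ -sC T := by
  rw [sC_eq, sC_eq, ← Int.cast_neg]
  intro h
  exact Z5 S T (castinj h)

lemma C4 {S T : Idx 3} (h : sC S = sC T) : S = T := by
  rw [sC_eq, sC_eq] at h
  exact Z4 S T (castinj h)

lemma prod_self_ne (μ : ℂ) :
    (((allW.filter fun lam => lam ≠ μ)).map fun lam => μ - lam).prod ≠ 0 := by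
  apply List.prod_ne_zero
  intro h0
  obtain ⟨lam, hmem, heq⟩ := List.mem_map.mp h0
  have h1 : lam ≠ μ := of_decide_eq_true (List.mem_filter.mp hmem).2
  exact h1 (by linear_combination -heq)

lemma prod_other {μ ν : ℂ} (hν : ν ∈ allW) (hne : ν ≠ μ) :
    (((allW.filter fun lam => lam ≠ μ)).map fun lam => ν - lam).prod = 0 := by
  apply List.prod_eq_zero
  exact List.mem_map.mpr ⟨ν, List.mem_filter.mpr ⟨hν, decide_eq_true hne⟩, sub_self ν⟩

lemma mem_of_smul (I : Submodule ℂ P) {Y B : P} {c : ℂ} (hY : Y ∈ I) (hc : c ≠ 0)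
    (h : Y = c • B) : B ∈ I := by
  have h2 : B = c⁻¹ • Y := by rw [h, smul_smul, inv_mul_cancel₀ hc, one_smul]
  rw [h2]; exact Submodule.smul_mem I _ hY

lemma extract_E (I : Submodule ℂ P) (hideal : ∀ R ∈ g0, ∀ S ∈ I, ebr R S ∈ I)
    (X : P) (hX : X ∈ I) (i j : Fin 9) (hij : i ≠ j) (hnz : X.1 i j ≠ 0) :
    ((Matrix.single i j 1, 0, 0) : P) ∈ I := by
  set μ := tC i - tC j with hμ
  set l := allW.filter (fun lam => lam ≠ μ) with hl
  set Y := polyApply l X with hY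
  have hYI : Y ∈ I := polyApply_mem I hideal l X hX
  have hc : Y.1 i j ≠ 0 := by
    rw [hY, polyApply_fst]
    exact mul_ne_zero (prod_self_ne μ) hnz
  have hother1 : ∀ k m : Fin 9, ¬(k = i ∧ m = j) → Y.1 k m = 0 := by
    intro k m hkm
    rw [hY, polyApply_fst]
    have hν : tC k - tC m ≠ μ := by
      intro he
      by_cases hkm2 : k = m
      · subst hkm2
        rw [sub_self] at he
        exact C0 hij (by linear_combination -he)
      · obtain ⟨h1, h2⟩ := C1 hkm2 he
        exact hkm ⟨h1, h2⟩
    rw [prod_other (memW1 k m) hν, zero_mul]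
  have hother2 : ∀ S, Y.2.1 S = 0 := by
    intro S
    rw [hY, polyApply_snd1, prod_other (memW2 S) (C2 i j S), zero_mul]
  have hother3 : ∀ S, Y.2.2 S = 0 := by
    intro S
    rw [hY, polyApply_snd2, prod_other (memW3 S) (C3 i j S), zero_mul]
  refine mem_of_smul I hYI hc ?_
  refine Prod.ext ?_ (Prod.ext ?_ ?_)
  · ext k m
    show Y.1 k m = (Y.1 i j • Matrix.single i j 1) k m
    by_cases h : k = i ∧ m = j
    · obtain ⟨rfl, rfl⟩ := h
      simp [Matrix.single]
    · rw [hother1 k m h]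
      have h' : ¬(i = k ∧ j = m) := fun hh => h ⟨hh.1.symm, hh.2.symm⟩
      simp [Matrix.single, h']
  · funext S
    show Y.2.1 S = (Y.1 i j • ((Matrix.single i j 1, 0, 0) : P)).2.1 S
    rw [hother2 S]
    simp
  · funext S
    show Y.2.2 S = (Y.1 i j • ((Matrix.single i j 1, 0, 0) : P)).2.2 S
    rw [hother3 S]
    simp

lemma extract_U (I : Submodule ℂ P) (hideal : ∀ R ∈ g0, ∀ S ∈ I, ebr R S ∈ I)
    (X : P) (hX : X ∈ I) (S : Idx 3) (hnz : X.2.1 S ≠ 0) :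
    ((0, eb S, 0) : P) ∈ I := by
  set μ := sC S with hμ
  set l := allW.filter (fun lam => lam ≠ μ) with hl
  set Y := polyApply l X with hY
  have hYI : Y ∈ I := polyApply_mem I hideal l X hX
  have hc : Y.2.1 S ≠ 0 := by
    rw [hY, polyApply_snd1]
    exact mul_ne_zero (prod_self_ne μ) hnz
  have hother1 : ∀ k m : Fin 9, Y.1 k m = 0 := by
    intro k m
    rw [hY, polyApply_fst, prod_other (memW1 k m) (fun he => C2 k m S he.symm), zero_mul]
  have hother2 : ∀ T, T ≠ S → Y.2.1 T = 0 := by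
    intro T hT
    rw [hY, polyApply_snd1, prod_other (memW2 T) (fun he => hT (C4 he)), zero_mul]
  have hother3 : ∀ T, Y.2.2 T = 0 := by
    intro T
    rw [hY, polyApply_snd2, prod_other (memW3 T)
      (fun he => C5 S T (by linear_combination -he)), zero_mul]
  refine mem_of_smul I hYI hc ?_
  refine Prod.ext ?_ (Prod.ext ?_ ?_)
  · ext k m
    show Y.1 k m = (Y.2.1 S • ((0, eb S, 0) : P)).1 k m
    rw [hother1 k m]
    simp
  · funext T
    show Y.2.1 T = (Y.2.1 S • ((0, eb S, 0) : P)).2.1 T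
    by_cases h : T = S
    · subst h
      simp [eb]
    · rw [hother2 T h]
      simp [eb, h]
  · funext T
    show Y.2.2 T = (Y.2.1 S • ((0, eb S, 0) : P)).2.2 T
    rw [hother3 T]
    simp

lemma extract_V (I : Submodule ℂ P) (hideal : ∀ R ∈ g0, ∀ S ∈ I, ebr R S ∈ I)
    (X : P) (hX : X ∈ I) (S : Idx 3) (hnz : X.2.2 S ≠ 0) :
    ((0, 0, eb S) : P) ∈ I := by
  set μ := -sC S with hμ
  set l := allW.filter (fun lam => lam ≠ μ) with hl
  set Y := polyApply l X with hY
  have hYI : Y ∈ I := polyApply_mem I hideal l X hX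
  have hc : Y.2.2 S ≠ 0 := by
    rw [hY, polyApply_snd2]
    exact mul_ne_zero (prod_self_ne μ) hnz
  have hother1 : ∀ k m : Fin 9, Y.1 k m = 0 := by
    intro k m
    rw [hY, polyApply_fst, prod_other (memW1 k m) (fun he => C3 k m S he.symm), zero_mul]
  have hother2 : ∀ T, Y.2.1 T = 0 := by
    intro T
    rw [hY, polyApply_snd1, prod_other (memW2 T) (fun he => C5 T S he), zero_mul]
  have hother3 : ∀ T, T ≠ S → Y.2.2 T = 0 := by
    intro T hT
    rw [hY, polyApply_snd2, prod_other (memW3 T)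
      (fun he => hT (C4 (by linear_combination -he))), zero_mul]
  refine mem_of_smul I hYI hc ?_
  refine Prod.ext ?_ (Prod.ext ?_ ?_)
  · ext k m
    show Y.1 k m = (Y.2.2 S • ((0, 0, eb S) : P)).1 k m
    rw [hother1 k m]
    simp
  · funext T
    show Y.2.1 T = (Y.2.2 S • ((0, 0, eb S) : P)).2.1 T
    rw [hother2 T]
    simp
  · funext T
    show Y.2.2 T = (Y.2.2 S • ((0, 0, eb S) : P)).2.2 T
    by_cases h : T = S
    · subst h
      simp [eb]
    · rw [hother3 T h]
      simp [eb, h]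

end Aux
namespace Aux

lemma E_g0 {i j : Fin 9} (hij : i ≠ j) : ((Matrix.single i j 1, 0, 0) : P) ∈ g0 := by
  rw [mem_g0_iff]
  show Matrix.trace (Matrix.single i j 1) = 0
  simp only [Matrix.trace, Matrix.diag, Matrix.single, Matrix.of_apply]
  refine Finset.sum_eq_zero fun x _ => if_neg fun hh => hij (hh.1.trans hh.2.symm)

lemma UV_g0 (u v : Lam 3) : ((0, u, v) : P) ∈ g0 := by
  rw [mem_g0_iff]
  show Matrix.trace (0 : Matrix (Fin 9) (Fin 9) ℂ) = 0
  simp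

lemma moveCol (I : Submodule ℂ P) (hideal : ∀ R ∈ g0, ∀ S ∈ I, ebr R S ∈ I)
    {i j : Fin 9} (h : ((Matrix.single i j 1, 0, 0) : P) ∈ I)
    {l : Fin 9} (hlj : l ≠ j) (hli : l ≠ i) :
    ((Matrix.single i l 1, 0, 0) : P) ∈ I := by
  have h1 := hideal _ (E_g0 (Ne.symm hlj)) _ h
  rw [ebr_mat_mat] at h1
  rw [Matrix.single_mul_single_of_ne (c := (1:ℂ)) j l i hli 1, Matrix.single_mul_single_same] at h1
  have he : ((Matrix.single i l 1, 0, 0) : P) =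
      -(((0 : Matrix (Fin 9) (Fin 9) ℂ) - Matrix.single i l (1 * 1), 0, 0) : P) := by
    refine Prod.ext ?_ (Prod.ext ?_ ?_) <;> simp
  rw [he]
  exact Submodule.neg_mem I h1

lemma moveRow (I : Submodule ℂ P) (hideal : ∀ R ∈ g0, ∀ S ∈ I, ebr R S ∈ I)
    {i j : Fin 9} (h : ((Matrix.single i j 1, 0, 0) : P) ∈ I)
    {k : Fin 9} (hki : k ≠ i) (hkj : k ≠ j) :
    ((Matrix.single k j 1, 0, 0) : P) ∈ I := by
  have h1 := hideal _ (E_g0 hki) _ h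
  rw [ebr_mat_mat] at h1
  rw [Matrix.single_mul_single_same, Matrix.single_mul_single_of_ne (c := (1:ℂ)) i j k (Ne.symm hkj) 1] at h1
  have he : ((Matrix.single k j 1, 0, 0) : P) =
      ((Matrix.single k j (1 * 1) - (0 : Matrix (Fin 9) (Fin 9) ℂ), 0, 0) : P) := by
    refine Prod.ext ?_ (Prod.ext ?_ ?_) <;> simp
  rw [he]
  exact h1

lemma third_index (i j : Fin 9) : ∃ k : Fin 9, k ≠ i ∧ k ≠ j := by
  by_contra hcon
  push_neg at hcon
  have hsub : (Finset.univ : Finset (Fin 9)) ⊆ {i, j} := by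
    intro x _
    by_cases hx : x = i
    · simp [hx]
    · simp [hcon x hx]
  have h9 : (9 : ℕ) ≤ ({i, j} : Finset (Fin 9)).card := by
    have := Finset.card_le_card hsub
    simpa using this
  have h2 : ({i, j} : Finset (Fin 9)).card ≤ 2 := by
    apply le_trans (Finset.card_insert_le i {j})
    simp
  omega

lemma swapE (I : Submodule ℂ P) (hideal : ∀ R ∈ g0, ∀ S ∈ I, ebr R S ∈ I)
    {i j : Fin 9} (hij : i ≠ j) (h : ((Matrix.single i j 1, 0, 0) : P) ∈ I) :
    ((Matrix.single j i 1, 0, 0) : P) ∈ I := by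
  obtain ⟨k, hki, hkj⟩ := third_index i j
  have h1 := moveRow I hideal h hki hkj
  have h2 := moveCol I hideal h1 hij (Ne.symm hki)
  exact moveRow I hideal h2 (Ne.symm hkj) (Ne.symm hij)

lemma reach (I : Submodule ℂ P) (hideal : ∀ R ∈ g0, ∀ S ∈ I, ebr R S ∈ I)
    {i j : Fin 9} (hij : i ≠ j) (h : ((Matrix.single i j 1, 0, 0) : P) ∈ I) :
    ∀ k l : Fin 9, k ≠ l → ((Matrix.single k l 1, 0, 0) : P) ∈ I := by
  intro k l hkl
  by_cases hk1 : k = i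
  · subst hk1
    by_cases hl1 : l = j
    · subst hl1; exact h
    · exact moveCol I hideal h hl1 (Ne.symm hkl)
  · by_cases hk2 : k = j
    · subst hk2
      have h2 := swapE I hideal hij h
      by_cases hl1 : l = i
      · subst hl1; exact h2
      · exact moveCol I hideal h2 hl1 (Ne.symm hkl)
    · have h2 := moveRow I hideal h hk1 hk2
      by_cases hl1 : l = j
      · subst hl1; exact h2
      · exact moveCol I hideal h2 hl1 (Ne.symm hkl)

lemma allH (I : Submodule ℂ P) (hideal : ∀ R ∈ g0, ∀ S ∈ I, ebr R S ∈ I)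
    (hE : ∀ k l : Fin 9, k ≠ l → ((Matrix.single k l 1, 0, 0) : P) ∈ I) :
    ∀ i j : Fin 9, i ≠ j →
      ((Matrix.single i i 1 - Matrix.single j j 1, 0, 0) : P) ∈ I := by
  intro i j hij
  have h1 := hideal _ (E_g0 hij) _ (hE j i (Ne.symm hij))
  rw [ebr_mat_mat] at h1
  rw [Matrix.single_mul_single_same, Matrix.single_mul_single_same] at h1
  have he : ((Matrix.single i i 1 - Matrix.single j j 1, 0, 0) : P) =
      ((Matrix.single i i (1 * 1) - Matrix.single j j (1 * 1), 0, 0) : P) := by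
    norm_num
  rw [he]
  exact h1

lemma diagExtract (I : Submodule ℂ P) (hideal : ∀ R ∈ g0, ∀ S ∈ I, ebr R S ∈ I)
    (d : Fin 9 → ℂ) (hd : ((Matrix.diagonal d, 0, 0) : P) ∈ I)
    {a b : Fin 9} (hab : d a ≠ d b) :
    ((Matrix.single a b 1, 0, 0) : P) ∈ I := by
  have hab' : a ≠ b := fun h => hab (by rw [h])
  have h1 := hideal _ (E_g0 hab') _ hd
  rw [ebr_mat_mat] at h1
  have he : Matrix.single a b 1 * Matrix.diagonal d -
      Matrix.diagonal d * Matrix.single a b 1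
      = (d b - d a) • Matrix.single a b (1 : ℂ) := by
    ext x y
    simp only [Matrix.sub_apply, Matrix.mul_diagonal, Matrix.diagonal_mul, Matrix.smul_apply,
      Matrix.single, Matrix.of_apply, smul_eq_mul]
    by_cases hx : a = x ∧ b = y
    · obtain ⟨rfl, rfl⟩ := hx
      simp only [and_self, if_pos]
      ring
    · simp [hx]
  rw [he] at h1
  refine mem_of_smul I h1 (sub_ne_zero.mpr (Ne.symm hab)) ?_
  refine Prod.ext ?_ (Prod.ext ?_ ?_) <;> simp

lemma pick_ab (S : Idx 3) : ∃ a b : Fin 9, a ∈ S.1 ∧ b ∉ S.1 ∧ a ≠ b := by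
  have h1 : S.1.Nonempty := Finset.card_pos.mp (by rw [S.2]; norm_num)
  obtain ⟨a, ha⟩ := h1
  have h2 : ∃ b : Fin 9, b ∉ S.1 := by
    by_contra hcon
    push_neg at hcon
    have : (Finset.univ : Finset (Fin 9)) ⊆ S.1 := fun x _ => hcon x
    have := Finset.card_le_card this
    rw [S.2] at this
    simp at this
  obtain ⟨b, hb⟩ := h2
  exact ⟨a, b, ha, hb, fun h => hb (h ▸ ha)⟩

lemma stdsub_diag (a b : Fin 9) :
    Matrix.single a a (1:ℂ) - Matrix.single b b 1 =
      Matrix.diagonal (fun x => (if a = x then 1 else 0) - (if b = x then 1 else 0)) := by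
  ext x y
  simp only [Matrix.sub_apply, Matrix.single, Matrix.of_apply, Matrix.diagonal_apply]
  by_cases hxy : x = y
  · subst hxy
    by_cases hxa : a = x <;> by_cases hxb : b = x <;> simp [hxa, hxb]
  · have h1 : ¬(a = x ∧ a = y) := fun hh => hxy (hh.1.symm.trans hh.2)
    have h2 : ¬(b = x ∧ b = y) := fun hh => hxy (hh.1.symm.trans hh.2)
    simp [h1, h2, hxy]

lemma dsum_one {a b : Fin 9} (S : Idx 3) (ha : a ∈ S.1) (hb : b ∉ S.1) :
    (∑ i ∈ S.1, ((if a = i then (1:ℂ) else 0) - (if b = i then 1 else 0))) = 1 := by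
  rw [Finset.sum_sub_distrib]
  rw [Finset.sum_ite_eq S.1 a (fun _ => (1:ℂ)), Finset.sum_ite_eq S.1 b (fun _ => (1:ℂ))]
  simp [ha, hb]

lemma getU (I : Submodule ℂ P) (hideal : ∀ R ∈ g0, ∀ S ∈ I, ebr R S ∈ I)
    (hEH : ∀ a b : Fin 9, a ≠ b →
      ((Matrix.single a a 1 - Matrix.single b b 1, 0, 0) : P) ∈ I)
    (S : Idx 3) : ((0, eb S, 0) : P) ∈ I := by
  obtain ⟨a, b, ha, hb, hab⟩ := pick_ab S
  have h1 := hideal _ (UV_g0 (eb S) 0) _ (hEH a b hab)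
  rw [ebr_u_mat, stdsub_diag, der_diagonal] at h1
  refine mem_of_smul I h1 (c := -1) (by norm_num) ?_
  refine Prod.ext ?_ (Prod.ext ?_ ?_)
  · show (0 : Matrix (Fin 9) (Fin 9) ℂ) = ((-1 : ℂ) • ((0, eb S, 0) : P)).1
    simp
  · funext s
    show -((∑ i ∈ s.1, ((if a = i then (1:ℂ) else 0) - (if b = i then 1 else 0))) * eb S s)
      = ((-1 : ℂ) • ((0, eb S, 0) : P)).2.1 s
    by_cases hs : s = S
    · subst hs
      rw [dsum_one s ha hb]
      simp [eb]
    · simp [eb, hs]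
  · show (0 : Lam 3) = ((-1 : ℂ) • ((0, eb S, 0) : P)).2.2
    simp

lemma getV (I : Submodule ℂ P) (hideal : ∀ R ∈ g0, ∀ S ∈ I, ebr R S ∈ I)
    (hEH : ∀ a b : Fin 9, a ≠ b →
      ((Matrix.single a a 1 - Matrix.single b b 1, 0, 0) : P) ∈ I)
    (S : Idx 3) : ((0, 0, eb S) : P) ∈ I := by
  obtain ⟨a, b, ha, hb, hab⟩ := pick_ab S
  have h1 := hideal _ (UV_g0 0 (eb S)) _ (hEH a b hab)
  rw [ebr_v_mat, stdsub_diag, Matrix.diagonal_transpose, der_diagonal] at h1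
  have he : ((0, 0, eb S) : P) =
      ((0, 0, fun s => (∑ i ∈ s.1, ((if a = i then (1:ℂ) else 0) - (if b = i then 1 else 0)))
        * eb S s) : P) := by
    refine Prod.ext rfl (Prod.ext rfl ?_)
    funext s
    show eb S s = (∑ i ∈ s.1, ((if a = i then (1:ℂ) else 0) - if b = i then 1 else 0)) * eb S s
    by_cases hs : s = S
    · rw [hs, dsum_one S ha hb, one_mul]
    · have h0 : eb S s = 0 := by simp [eb, hs]
      rw [h0, mul_zero]
  rw [he]
  exact h1

lemma getEfromU (I : Submodule ℂ P) (hideal : ∀ R ∈ g0, ∀ S ∈ I, ebr R S ∈ I)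
    (S : Idx 3) (hU : ((0, eb S, 0) : P) ∈ I) :
    ∃ a b : Fin 9, a ≠ b ∧ ((Matrix.single a b 1, 0, 0) : P) ∈ I := by
  have h1 := hideal _ (UV_g0 0 (eb S)) _ hU
  rw [ebr_v_u] at h1
  obtain ⟨d, hdiag, hd1, hd2⟩ := crossMat_eb S
  rw [hdiag, Matrix.diagonal_neg] at h1
  obtain ⟨a, b, ha, hb, hab⟩ := pick_ab S
  refine ⟨a, b, hab, diagExtract I hideal _ h1 ?_⟩
  intro hh
  apply hd2 b hb
  rw [← neg_neg (d b), ← hh, neg_neg, hd1 a ha]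

lemma getEfromV (I : Submodule ℂ P) (hideal : ∀ R ∈ g0, ∀ S ∈ I, ebr R S ∈ I)
    (S : Idx 3) (hV : ((0, 0, eb S) : P) ∈ I) :
    ∃ a b : Fin 9, a ≠ b ∧ ((Matrix.single a b 1, 0, 0) : P) ∈ I := by
  have h1 := hideal _ (UV_g0 (eb S) 0) _ hV
  rw [ebr_u_v] at h1
  obtain ⟨d, hdiag, hd1, hd2⟩ := crossMat_eb S
  rw [hdiag] at h1
  obtain ⟨a, b, ha, hb, hab⟩ := pick_ab S
  refine ⟨a, b, hab, diagExtract I hideal _ h1 ?_⟩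
  intro hh
  exact hd2 b hb (hh ▸ hd1 a ha)

end Aux
namespace Aux

lemma span_final (I : Submodule ℂ P)
    (hE : ∀ k l : Fin 9, k ≠ l → ((Matrix.single k l 1, 0, 0) : P) ∈ I)
    (hH : ∀ i j : Fin 9, i ≠ j →
      ((Matrix.single i i 1 - Matrix.single j j 1, 0, 0) : P) ∈ I)
    (hU : ∀ S : Idx 3, ((0, eb S, 0) : P) ∈ I)
    (hV : ∀ S : Idx 3, ((0, 0, eb S) : P) ∈ I) :
    g0 ≤ I := by
  intro X hX
  have htr : Matrix.trace X.1 = 0 := (mem_g0_iff X).mp hX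
  have htr' : (∑ k : Fin 9, X.1 k k) = 0 := by
    simpa [Matrix.trace, Matrix.diag] using htr
  have hH' : ∀ i : Fin 9,
      ((Matrix.single i i 1 - Matrix.single (8:Fin 9) (8:Fin 9) 1, 0, 0) : P)
        ∈ I := by
    intro i
    by_cases h : i = (8 : Fin 9)
    · subst h
      have h0 : ((Matrix.single (8:Fin 9) (8:Fin 9) (1:ℂ) -
          Matrix.single (8:Fin 9) (8:Fin 9) 1, 0, 0) : P) = 0 := by
        refine Prod.ext ?_ (Prod.ext ?_ ?_) <;> simp
      rw [h0]
      exact I.zero_mem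
    · exact hH i 8 h
  have m1 : ((X.1, 0, 0) : P) ∈ I := by
    have heq : ((X.1, 0, 0) : P) = ∑ i : Fin 9, ∑ j : Fin 9,
        (if i = j then X.1 i i •
          ((Matrix.single i i 1 - Matrix.single (8:Fin 9) (8:Fin 9) 1, 0, 0) : P)
         else X.1 i j • ((Matrix.single i j 1, 0, 0) : P)) := by
      refine Prod.ext ?_ (Prod.ext ?_ ?_)
      · simp only [Prod.fst_sum, apply_ite (Prod.fst), Prod.smul_fst]
        have hsummand : ∀ i j : Fin 9,
            (if i = j then X.1 i i • (Matrix.single i i 1 -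
                Matrix.single (8:Fin 9) (8:Fin 9) 1)
             else X.1 i j • Matrix.single i j 1)
            = X.1 i j • Matrix.single i j 1 -
              (if i = j then X.1 i i • Matrix.single (8:Fin 9) (8:Fin 9) (1:ℂ) else 0) := by
          intro i j
          by_cases h : i = j
          · subst h
            rw [if_pos rfl, if_pos rfl, smul_sub]
          · rw [if_neg h, if_neg h, sub_zero]
        simp only [hsummand, Finset.sum_sub_distrib]
        have hA : (∑ i : Fin 9, ∑ j : Fin 9, X.1 i j • Matrix.single i j (1:ℂ)) = X.1 := by
          simp only [Matrix.smul_single, smul_eq_mul, mul_one]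
          exact (Matrix.matrix_eq_sum_single X.1).symm
        have hB : (∑ i : Fin 9, ∑ j : Fin 9,
            (if i = j then X.1 i i • Matrix.single (8:Fin 9) (8:Fin 9) (1:ℂ) else 0))
            = 0 := by
          have hinner : ∀ i : Fin 9, (∑ j : Fin 9,
              (if i = j then X.1 i i • Matrix.single (8:Fin 9) (8:Fin 9) (1:ℂ) else 0))
              = X.1 i i • Matrix.single (8:Fin 9) (8:Fin 9) (1:ℂ) := by
            intro i
            rw [Finset.sum_ite_eq Finset.univ i
              (fun _ => X.1 i i • Matrix.single (8:Fin 9) (8:Fin 9) (1:ℂ))]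
            simp
          simp only [hinner]
          rw [← Finset.sum_smul, htr', zero_smul]
        rw [hA, hB, sub_zero]
      · simp [Prod.snd_sum, Prod.fst_sum, apply_ite (Prod.snd), apply_ite (Prod.fst),
          Prod.smul_snd, Prod.smul_fst, apply_ite (fun p : Lam 3 × Lam 3 => p.1)]
      · simp [Prod.snd_sum, apply_ite (Prod.snd), Prod.smul_snd,
          apply_ite (fun p : Lam 3 × Lam 3 => p.2)]
    rw [heq]
    refine Submodule.sum_mem I fun i _ => Submodule.sum_mem I fun j _ => ?_
    by_cases h : i = j
    · rw [if_pos h]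
      exact Submodule.smul_mem I _ (hH' i)
    · rw [if_neg h]
      exact Submodule.smul_mem I _ (hE i j h)
  have m2 : ((0, X.2.1, 0) : P) ∈ I := by
    have heq : ((0, X.2.1, 0) : P) = ∑ S : Idx 3, X.2.1 S • ((0, eb S, 0) : P) := by
      refine Prod.ext ?_ (Prod.ext ?_ ?_)
      · show (0 : Matrix (Fin 9) (Fin 9) ℂ) = (∑ S : Idx 3, X.2.1 S • ((0, eb S, 0) : P)).1
        simp [Prod.fst_sum, Prod.smul_fst]
      · show X.2.1 = (∑ S : Idx 3, X.2.1 S • ((0, eb S, 0) : P)).2.1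
        funext T
        simp only [Prod.snd_sum, Prod.fst_sum, Finset.sum_apply, Prod.smul_snd, Prod.smul_fst,
          Pi.smul_apply, smul_eq_mul, eb, mul_ite, mul_one, mul_zero]
        rw [Finset.sum_ite_eq Finset.univ T (fun S => X.2.1 S)]
        simp
      · show (0 : Lam 3) = (∑ S : Idx 3, X.2.1 S • ((0, eb S, 0) : P)).2.2
        simp [Prod.snd_sum, Prod.smul_snd]
    rw [heq]
    exact Submodule.sum_mem I fun S _ => Submodule.smul_mem I _ (hU S)
  have m3 : ((0, 0, X.2.2) : P) ∈ I := by
    have heq : ((0, 0, X.2.2) : P) = ∑ S : Idx 3, X.2.2 S • ((0, 0, eb S) : P) := by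
      refine Prod.ext ?_ (Prod.ext ?_ ?_)
      · show (0 : Matrix (Fin 9) (Fin 9) ℂ) = (∑ S : Idx 3, X.2.2 S • ((0, 0, eb S) : P)).1
        simp [Prod.fst_sum, Prod.smul_fst]
      · show (0 : Lam 3) = (∑ S : Idx 3, X.2.2 S • ((0, 0, eb S) : P)).2.1
        simp [Prod.snd_sum, Prod.fst_sum, Prod.smul_snd, Prod.smul_fst]
      · show X.2.2 = (∑ S : Idx 3, X.2.2 S • ((0, 0, eb S) : P)).2.2
        funext T
        simp only [Prod.snd_sum, Finset.sum_apply, Prod.smul_snd, Pi.smul_apply, smul_eq_mul,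
          eb, mul_ite, mul_one, mul_zero]
        rw [Finset.sum_ite_eq Finset.univ T (fun S => X.2.2 S)]
        simp
    rw [heq]
    exact Submodule.sum_mem I fun S _ => Submodule.smul_mem I _ (hV S)
  have hXsum : X = ((X.1, 0, 0) : P) + ((0, X.2.1, 0) : P) + ((0, 0, X.2.2) : P) := by
    refine Prod.ext ?_ (Prod.ext ?_ ?_) <;> simp
  rw [hXsum]
  exact add_mem (add_mem m1 m2) m3

end Aux
open Aux in
/-- The Lie algebra `g = sl(9,ℂ) ⊕ Λ³(ℂ⁹) ⊕ Λ³(ℂ⁹)` is simple: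
every nonzero ideal of `g` equals `g`. -/
theorem stmt13 (I : Submodule ℂ P) (hle : I ≤ g0)
    (hideal : ∀ R ∈ g0, ∀ S ∈ I, ebr R S ∈ I) (hne : I ≠ ⊥) :
    I = g0 := by
  apply le_antisymm hle
  obtain ⟨X, hXI, hX0⟩ := (Submodule.ne_bot_iff I).mp hne
  have seed : ∃ a b : Fin 9, a ≠ b ∧ ((Matrix.single a b 1, 0, 0) : P) ∈ I := by
    by_cases h1 : ∃ i j : Fin 9, i ≠ j ∧ X.1 i j ≠ 0
    · obtain ⟨i, j, hij, hnz⟩ := h1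
      exact ⟨i, j, hij, extract_E I hideal X hXI i j hij hnz⟩
    by_cases h2 : ∃ S : Idx 3, X.2.1 S ≠ 0
    · obtain ⟨S, hS⟩ := h2
      exact getEfromU I hideal S (extract_U I hideal X hXI S hS)
    by_cases h3 : ∃ S : Idx 3, X.2.2 S ≠ 0
    · obtain ⟨S, hS⟩ := h3
      exact getEfromV I hideal S (extract_V I hideal X hXI S hS)
    push_neg at h1 h2 h3
    set d : Fin 9 → ℂ := fun i => X.1 i i with hd
    have hXdiag : X = ((Matrix.diagonal d, 0, 0) : P) := by
      refine Prod.ext ?_ (Prod.ext ?_ ?_)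
      · ext i j
        by_cases hij : i = j
        · subst hij
          simp [Matrix.diagonal_apply, hd]
        · rw [show ((Matrix.diagonal d, 0, 0) : P).1 = Matrix.diagonal d from rfl,
            Matrix.diagonal_apply_ne d hij]
          exact h1 i j hij
      · funext S; exact h2 S
      · funext S; exact h3 S
    have hdne : ∃ i, d i ≠ 0 := by
      by_contra hcon
      push_neg at hcon
      apply hX0
      rw [hXdiag]
      have hzero : d = fun _ => 0 := funext hcon
      rw [hzero]
      refine Prod.ext ?_ (Prod.ext ?_ ?_) <;> simp
    obtain ⟨i, hi⟩ := hdne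
    have htr : Matrix.trace X.1 = 0 := (mem_g0_iff X).mp (hle hXI)
    have htr' : (∑ k : Fin 9, d k) = 0 := by
      simpa [Matrix.trace, Matrix.diag, hd] using htr
    have hb : ∃ b, d b ≠ d i := by
      by_contra hcon
      push_neg at hcon
      have h9 : (∑ k : Fin 9, d k) = 9 * d i := by
        rw [Finset.sum_congr rfl fun k _ => hcon k, Finset.sum_const]
        simp [Finset.card_univ]
      rw [htr'] at h9
      apply hi
      have : (9 : ℂ) ≠ 0 := by norm_num
      field_simp at h9
      simpa using h9.symm
    obtain ⟨b, hbne⟩ := hb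
    have hXd : ((Matrix.diagonal d, 0, 0) : P) ∈ I := hXdiag ▸ hXI
    exact ⟨i, b, fun h => hbne (by rw [h]), diagExtract I hideal d hXd (Ne.symm hbne)⟩
  obtain ⟨a, b, hab, hseed⟩ := seed
  have hE := reach I hideal hab hseed
  have hHH := allH I hideal hE
  have hU := getU I hideal hHH
  have hV := getV I hideal hHH
  exact span_final I hE hHH hU hV
end
end

section
/- Let A ∈ S(U(1)×U(8)) ⊂ SU(9) act on sl(9,ℂ) ⊕ Λ³(ℂ⁹) ⊕ Λ³(ℂ⁹) by φ(A)(D,u,v) = (ADA⁻¹, Au, (Aᵀ)⁻¹v). Then φ(A) = id if and only if A = ωᵏE for some cube root of unity ω (k = 0,1,2); i.e., the kernel of φ is {E, ωE, ω²E} ≅ ℤ/3. -/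
open scoped BigOperators
open Matrix

noncomputable section

lemma minor_smul_one {k : ℕ} (c : ℂ) (s t : Idx k) :
    minor (c • (1 : Matrix (Fin 9) (Fin 9) ℂ)) s t = if s = t then c ^ k else 0 := by
  unfold minor
  by_cases h : s = t
  · subst h
    rw [if_pos rfl]
    have e : (Matrix.of fun i j : Fin k =>
        (c • (1 : Matrix (Fin 9) (Fin 9) ℂ)) (s.1.orderIsoOfFin s.2 i) (s.1.orderIsoOfFin s.2 j))
        = c • (1 : Matrix (Fin k) (Fin k) ℂ) := by
      ext i j
      simp only [Matrix.of_apply, Matrix.smul_apply, Matrix.one_apply, smul_eq_mul]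
      by_cases hij : i = j
      · subst hij; simp
      · rw [if_neg hij, if_neg, mul_zero]
        intro hcontra
        exact hij ((s.1.orderIsoOfFin s.2).injective (Subtype.ext hcontra))
    rw [e, Matrix.det_smul, Matrix.det_one, mul_one, Fintype.card_fin]
  · rw [if_neg h]
    obtain ⟨x, hxs, hxt⟩ : ∃ x ∈ s.1, x ∉ t.1 := by
      by_contra hc
      push_neg at hc
      exact h (Subtype.ext (Finset.eq_of_subset_of_card_le hc (by rw [s.2, t.2])))
    apply Matrix.det_eq_zero_of_row_eq_zero ((s.1.orderIsoOfFin s.2).symm ⟨x, hxs⟩)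
    intro j
    simp only [Matrix.of_apply, OrderIso.apply_symm_apply, Matrix.smul_apply, Matrix.one_apply,
      smul_eq_mul]
    rw [if_neg, mul_zero]
    intro hcontra
    exact hxt (hcontra ▸ (t.1.orderIsoOfFin t.2 j).2)

lemma act_smul_one (c : ℂ) (hc : c ^ 3 = 1) (u : Lam 3) :
    act (c • (1 : Matrix (Fin 9) (Fin 9) ℂ)) u = u := by
  funext s
  simp [act, minor_smul_one, ite_mul, hc]

lemma eq_smul_one_of_comm (A : Matrix (Fin 9) (Fin 9) ℂ)
    (h : ∀ D : Matrix (Fin 9) (Fin 9) ℂ, D.trace = 0 → A * D = D * A) :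
    A = A 0 0 • 1 := by
  ext i j
  by_cases hij : i = j
  · subst hij
    by_cases h0 : i = 0
    · subst h0; simp [Matrix.smul_apply, Matrix.one_apply]
    · have hc := h (Matrix.single 0 i 1)
        (Matrix.trace_single_eq_of_ne 0 i 1 (Ne.symm h0))
      have := congrArg (fun M => M 0 i) hc
      simp only [Matrix.mul_single_apply_same,
        Matrix.single_mul_apply_same, mul_one, one_mul] at this
      simp [Matrix.smul_apply, Matrix.one_apply, this]
  · have hc := h (Matrix.single j i 1)
      (Matrix.trace_single_eq_of_ne j i 1 (Ne.symm hij))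
    have := congrArg (fun M => M i i) hc
    simp [hij] at this
    simp [Matrix.smul_apply, Matrix.one_apply, hij, this]


/-- Let `A ∈ S(U(1)×U(8)) ⊂ SU(9)` act on `sl(9,ℂ) ⊕ Λ³(ℂ⁹) ⊕ Λ³(ℂ⁹)` by
`φ(A)(D,u,v) = (ADA⁻¹, Au, (Aᵀ)⁻¹v)`.  Then `φ(A) = id` iff `A = ωᵏ·1` for a cube
root of unity `ω = e^{2πi/3}`; i.e. the kernel of `φ` is `{1, ω·1, ω²·1} ≅ ℤ/3`. -/
theorem stmt15 (A : Matrix (Fin 9) (Fin 9) ℂ)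
    (hunitary : Aᴴ * A = 1)
    (hblock : ∀ j : Fin 9, j ≠ 0 → A 0 j = 0 ∧ A j 0 = 0)
    (hdet : A.det = 1) :
    ((∀ D : Matrix (Fin 9) (Fin 9) ℂ, D.trace = 0 → A * D * A⁻¹ = D) ∧
      (∀ u : Lam 3, act A u = u) ∧ (∀ v : Lam 3, act (Aᵀ)⁻¹ v = v))
    ↔ ∃ k : Fin 3, A = Complex.exp (2 * (Real.pi : ℂ) * Complex.I / 3) ^ (k : ℕ) • 1 := by
  have hω : IsPrimitiveRoot (Complex.exp (2 * (Real.pi : ℂ) * Complex.I / 3)) 3 := by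
    have := Complex.isPrimitiveRoot_exp 3 (by norm_num)
    norm_num at this
    convert this using 3
  constructor
  · rintro ⟨h1, h2, h3⟩
    have hAunit : IsUnit A.det := by rw [hdet]; exact isUnit_one
    have hcomm : ∀ D : Matrix (Fin 9) (Fin 9) ℂ, D.trace = 0 → A * D = D * A := by
      intro D hD
      have := congrArg (fun M => M * A) (h1 D hD)
      simpa [Matrix.mul_assoc, Matrix.nonsing_inv_mul A hAunit] using this
    have hA : A = A 0 0 • 1 := eq_smul_one_of_comm A hcomm
    set c := A 0 0 with hc
    have hc3 : c ^ 3 = 1 := by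
      have s0 : Idx 3 := ⟨({0, 1, 2} : Finset (Fin 9)), by decide⟩
      have := congrFun (h2 (fun t => if t = s0 then 1 else 0)) s0
      rw [hA] at this
      simpa [act, minor_smul_one, ite_mul, mul_ite] using this
    obtain ⟨i, hi, hiq⟩ := hω.eq_pow_of_pow_eq_one hc3
    exact ⟨⟨i, hi⟩, by rw [hA, hiq]⟩
  · rintro ⟨k, rfl⟩
    set ω := Complex.exp (2 * (Real.pi : ℂ) * Complex.I / 3) with hωdef
    set c := ω ^ (k : ℕ) with hcdef
    have hc3 : c ^ 3 = 1 := by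
      rw [hcdef, ← pow_mul, mul_comm, pow_mul, hω.pow_eq_one, one_pow]
    have hc0 : c ≠ 0 := fun h => by simp [h] at hc3
    have hinv : (c • (1 : Matrix (Fin 9) (Fin 9) ℂ))⁻¹ = c⁻¹ • 1 := by
      apply Matrix.inv_eq_right_inv
      rw [Matrix.smul_mul, Matrix.mul_smul, smul_smul, mul_one, mul_inv_cancel₀ hc0, one_smul]
    have hci3 : (c⁻¹) ^ 3 = 1 := by rw [inv_pow, hc3, inv_one]
    refine ⟨fun D hD => ?_, fun u => act_smul_one c hc3 u, fun v => ?_⟩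
    · simp [hinv, Matrix.smul_mul, Matrix.mul_smul, smul_smul, inv_mul_cancel₀ hc0]
    · rw [Matrix.transpose_smul, Matrix.transpose_one, hinv]
      exact act_smul_one c⁻¹ hci3 v

end
end
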